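/- arXiv:2403.01326 — 4 statements merged into one kernel-verified Lean document; each statement's English description precedes it below -/
import Mathlib

section
/- Generalization boundedness of weight-sharing NAS (Theorem 1/Theorem 2, full form): Under hypotheses (H1), (H2) and (H3), for every index j ∈ {1,…,T}, the norm of the j-th weight-sharing subnet weight is bounded as ‖ψ₀• + ψⱼ•‖ ≤ sqrt( λ₀‖ψ₀*‖²/λ̃ + (∑_{t=1}^{T} |L_t(ψ₀*) − L_t(ψₜ*)|)/λ̃ ). -/
/-- Generalization boundedness of weight-sharing NAS (full form). -/
theorem generalization_boundedness
    {V : Type*} [NormedAddCommGroup V] [InnerProductSpace ℝ V]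
    (T : ℕ) (hT : 1 ≤ T)
    (L : ℕ → V → ℝ) (hL : ∀ t ∈ Finset.Icc 1 T, ∀ ψ : V, 0 ≤ L t ψ)
    (l0 l : ℝ) (hl0 : 0 < l0) (hl : 0 < l)
    (ψ₀dot : V) (ψdot : ℕ → V) (ψ₀star : V) (ψstar : ℕ → V)
    (H1 : ∑ t ∈ Finset.Icc 1 T, (L t (ψ₀dot + ψdot t) + l * ‖ψdot t‖ ^ 2)
            + l0 * ‖ψ₀dot‖ ^ 2
          ≤ ∑ t ∈ Finset.Icc 1 T, L t ψ₀star + l0 * ‖ψ₀star‖ ^ 2)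
    (H2 : ∀ t ∈ Finset.Icc 1 T, ∀ ψ : V,
            L t (ψstar t) + (l0 * l / (l0 + l)) * ‖ψstar t‖ ^ 2
          ≤ L t ψ + (l0 * l / (l0 + l)) * ‖ψ‖ ^ 2)
    (H3 : ∀ t ∈ Finset.Icc 1 T, L t (ψstar t) ≤ L t (ψ₀dot + ψdot t))
    (j : ℕ) (hj : j ∈ Finset.Icc 1 T) :
    ‖ψ₀dot + ψdot j‖
      ≤ Real.sqrt (l0 * ‖ψ₀star‖ ^ 2 / (l0 * l / (l0 + l))
          + (∑ t ∈ Finset.Icc 1 T, |L t ψ₀star - L t (ψstar t)|)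
              / (l0 * l / (l0 + l))) := by

  set lt := l0 * l / (l0 + l) with hltdef
  have hlt : 0 < lt := by positivity
  set n := ‖ψ₀dot + ψdot j‖ with hn
  have hn0 : 0 ≤ n := norm_nonneg _
  have htri : n ≤ ‖ψ₀dot‖ + ‖ψdot j‖ := norm_add_le _ _
  have key1 : lt * n ^ 2 ≤ l0 * ‖ψ₀dot‖ ^ 2 + l * ‖ψdot j‖ ^ 2 := by
    have hx : (0:ℝ) ≤ ‖ψ₀dot‖ := norm_nonneg _
    have hy : (0:ℝ) ≤ ‖ψdot j‖ := norm_nonneg _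
    rw [hltdef, div_mul_eq_mul_div, div_le_iff₀ (by positivity)]
    nlinarith [sq_nonneg (l0 * ‖ψ₀dot‖ - l * ‖ψdot j‖),
      mul_le_mul_of_nonneg_left (pow_le_pow_left₀ hn0 htri 2)
        (le_of_lt (mul_pos hl0 hl))]
  have hsplit : ∑ t ∈ Finset.Icc 1 T, (L t (ψ₀dot + ψdot t) + l * ‖ψdot t‖ ^ 2)
      = ∑ t ∈ Finset.Icc 1 T, L t (ψ₀dot + ψdot t)
        + ∑ t ∈ Finset.Icc 1 T, l * ‖ψdot t‖ ^ 2 := Finset.sum_add_distrib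
  have hsingle : l * ‖ψdot j‖ ^ 2 ≤ ∑ t ∈ Finset.Icc 1 T, l * ‖ψdot t‖ ^ 2 :=
    Finset.single_le_sum (f := fun t => l * ‖ψdot t‖ ^ 2) (fun i _ => by positivity) hj
  have hH3 : ∑ t ∈ Finset.Icc 1 T, L t (ψstar t)
      ≤ ∑ t ∈ Finset.Icc 1 T, L t (ψ₀dot + ψdot t) := Finset.sum_le_sum H3
  have habs : ∑ t ∈ Finset.Icc 1 T, (L t ψ₀star - L t (ψstar t))
      ≤ ∑ t ∈ Finset.Icc 1 T, |L t ψ₀star - L t (ψstar t)| :=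
    Finset.sum_le_sum (fun i _ => le_abs_self _)
  have hsub : ∑ t ∈ Finset.Icc 1 T, (L t ψ₀star - L t (ψstar t))
      = ∑ t ∈ Finset.Icc 1 T, L t ψ₀star - ∑ t ∈ Finset.Icc 1 T, L t (ψstar t) :=
    Finset.sum_sub_distrib _ _
  have key2 : lt * n ^ 2 ≤ l0 * ‖ψ₀star‖ ^ 2
      + ∑ t ∈ Finset.Icc 1 T, |L t ψ₀star - L t (ψstar t)| := by
    linarith [key1, H1, hsingle, hH3, habs, hsub.ge, hsub.le, hsplit.le, hsplit.ge]
  have hrhs : (0:ℝ) ≤ l0 * ‖ψ₀star‖ ^ 2 / lt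
      + (∑ t ∈ Finset.Icc 1 T, |L t ψ₀star - L t (ψstar t)|) / lt := by
    have : (0:ℝ) ≤ ∑ t ∈ Finset.Icc 1 T, |L t ψ₀star - L t (ψstar t)| :=
      Finset.sum_nonneg (fun i _ => abs_nonneg _)
    positivity
  rw [show l0 * ‖ψ₀star‖ ^ 2 / lt
      + (∑ t ∈ Finset.Icc 1 T, |L t ψ₀star - L t (ψstar t)|) / lt
      = (l0 * ‖ψ₀star‖ ^ 2 + ∑ t ∈ Finset.Icc 1 T, |L t ψ₀star - L t (ψstar t)|) / lt
      from (add_div _ _ _).symm]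
  rw [Real.le_sqrt hn0, le_div_iff₀ hlt]
  linarith [key2]
  positivity
end

section
/- Squared-norm bound (core of inequality ineq-c): Under hypotheses (H1), (H2) and (H3), for every index j ∈ {1,…,T}, λ̃·‖ψ₀• + ψⱼ•‖² ≤ λ₀‖ψ₀*‖² + ∑_{t=1}^{T} |L_t(ψ₀*) − L_t(ψₜ*)|. -/
/-- Squared-norm bound (core of inequality ineq-c). -/
theorem squared_norm_bound
    {V : Type*} [NormedAddCommGroup V] [InnerProductSpace ℝ V]
    (T : ℕ) (hT : 1 ≤ T)
    (L : ℕ → V → ℝ) (hL : ∀ t ∈ Finset.Icc 1 T, ∀ ψ : V, 0 ≤ L t ψ)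
    (l0 l : ℝ) (hl0 : 0 < l0) (hl : 0 < l)
    (ψ₀dot : V) (ψdot : ℕ → V) (ψ₀star : V) (ψstar : ℕ → V)
    (H1 : ∑ t ∈ Finset.Icc 1 T, (L t (ψ₀dot + ψdot t) + l * ‖ψdot t‖ ^ 2)
            + l0 * ‖ψ₀dot‖ ^ 2
          ≤ ∑ t ∈ Finset.Icc 1 T, L t ψ₀star + l0 * ‖ψ₀star‖ ^ 2)
    (H2 : ∀ t ∈ Finset.Icc 1 T, ∀ ψ : V,
            L t (ψstar t) + (l0 * l / (l0 + l)) * ‖ψstar t‖ ^ 2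
          ≤ L t ψ + (l0 * l / (l0 + l)) * ‖ψ‖ ^ 2)
    (H3 : ∀ t ∈ Finset.Icc 1 T, L t (ψstar t) ≤ L t (ψ₀dot + ψdot t))
    (j : ℕ) (hj : j ∈ Finset.Icc 1 T) :
    (l0 * l / (l0 + l)) * ‖ψ₀dot + ψdot j‖ ^ 2
      ≤ l0 * ‖ψ₀star‖ ^ 2 + ∑ t ∈ Finset.Icc 1 T, |L t ψ₀star - L t (ψstar t)| := by
  set S := Finset.Icc 1 T
  have hpos : 0 < l0 + l := by linarith
  -- harmonic-mean splitting inequality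
  have key : (l0 * l / (l0 + l)) * ‖ψ₀dot + ψdot j‖ ^ 2
      ≤ l0 * ‖ψ₀dot‖ ^ 2 + l * ‖ψdot j‖ ^ 2 := by
    have htri := norm_add_le ψ₀dot (ψdot j)
    have hn : (0:ℝ) ≤ ‖ψ₀dot + ψdot j‖ := norm_nonneg _
    rw [div_mul_eq_mul_div, div_le_iff₀ hpos]
    nlinarith [sq_nonneg (l0 * ‖ψ₀dot‖ - l * ‖ψdot j‖), norm_nonneg ψ₀dot,
      norm_nonneg (ψdot j), mul_pos hl0 hl, pow_le_pow_left₀ hn htri 2]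
  -- from H1
  have hsplit : ∑ t ∈ S, (L t (ψ₀dot + ψdot t) + l * ‖ψdot t‖ ^ 2)
      = ∑ t ∈ S, L t (ψ₀dot + ψdot t) + ∑ t ∈ S, l * ‖ψdot t‖ ^ 2 :=
    Finset.sum_add_distrib
  have hjterm : l * ‖ψdot j‖ ^ 2 ≤ ∑ t ∈ S, l * ‖ψdot t‖ ^ 2 :=
    Finset.single_le_sum (f := fun t => l * ‖ψdot t‖ ^ 2) (fun t _ => by positivity) hj
  have hL2 : ∑ t ∈ S, L t ψ₀star
      ≤ ∑ t ∈ S, L t (ψ₀dot + ψdot t) + ∑ t ∈ S, |L t ψ₀star - L t (ψstar t)| := by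
    rw [← Finset.sum_add_distrib]
    refine Finset.sum_le_sum fun t ht => ?_
    have h3 := H3 t ht
    have := abs_sub_abs_le_abs_sub (L t ψ₀star) (L t (ψstar t))
    have habs := le_abs_self (L t ψ₀star - L t (ψstar t))
    linarith
  have hnn : 0 ≤ ∑ t ∈ S, L t (ψ₀dot + ψdot t) :=
    Finset.sum_nonneg fun t ht => hL t ht _
  linarith [hsplit ▸ H1]
end

section
/- Regularized loss bound at the weight-sharing solution (penultimate line of the proof of Theorem 1): Under hypotheses (H1), (H2) and (H3), for every index j ∈ {1,…,T}, L_j(ψ₀•+ψⱼ•) + λ̃‖ψ₀• + ψⱼ•‖² ≤ L_j(ψⱼ*) + λ₀‖ψ₀*‖² + ∑_{t=1}^{T} |L_t(ψ₀*) − L_t(ψₜ*)|, where the key ingredients are the weighted Cauchy–Schwarz inequality λ̃‖ψ₀•+ψⱼ•‖² ≤ λ₀‖ψ₀•‖² + λ‖ψⱼ•‖² and the single-task bound derived from (H1). -/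
/-- Regularized loss bound at the weight-sharing solution (penultimate line of the proof). -/
theorem regularized_loss_bound
    {V : Type*} [NormedAddCommGroup V] [InnerProductSpace ℝ V]
    (T : ℕ) (hT : 1 ≤ T)
    (L : ℕ → V → ℝ) (hL : ∀ t ∈ Finset.Icc 1 T, ∀ ψ : V, 0 ≤ L t ψ)
    (l0 l : ℝ) (hl0 : 0 < l0) (hl : 0 < l)
    (ψ₀dot : V) (ψdot : ℕ → V) (ψ₀star : V) (ψstar : ℕ → V)
    (H1 : ∑ t ∈ Finset.Icc 1 T, (L t (ψ₀dot + ψdot t) + l * ‖ψdot t‖ ^ 2)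
            + l0 * ‖ψ₀dot‖ ^ 2
          ≤ ∑ t ∈ Finset.Icc 1 T, L t ψ₀star + l0 * ‖ψ₀star‖ ^ 2)
    (H2 : ∀ t ∈ Finset.Icc 1 T, ∀ ψ : V,
            L t (ψstar t) + (l0 * l / (l0 + l)) * ‖ψstar t‖ ^ 2
          ≤ L t ψ + (l0 * l / (l0 + l)) * ‖ψ‖ ^ 2)
    (H3 : ∀ t ∈ Finset.Icc 1 T, L t (ψstar t) ≤ L t (ψ₀dot + ψdot t))
    (j : ℕ) (hj : j ∈ Finset.Icc 1 T) :
    L j (ψ₀dot + ψdot j) + (l0 * l / (l0 + l)) * ‖ψ₀dot + ψdot j‖ ^ 2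
      ≤ L j (ψstar j) + l0 * ‖ψ₀star‖ ^ 2
          + ∑ t ∈ Finset.Icc 1 T, |L t ψ₀star - L t (ψstar t)| := by
  set S := Finset.Icc 1 T
  -- weighted Cauchy–Schwarz
  have hsum : l0 + l > 0 := by linarith
  have cs : (l0 * l / (l0 + l)) * ‖ψ₀dot + ψdot j‖ ^ 2
      ≤ l0 * ‖ψ₀dot‖ ^ 2 + l * ‖ψdot j‖ ^ 2 := by
    have htri : ‖ψ₀dot + ψdot j‖ ≤ ‖ψ₀dot‖ + ‖ψdot j‖ := norm_add_le _ _
    have h0 : (0:ℝ) ≤ ‖ψ₀dot + ψdot j‖ := norm_nonneg _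
    have ha : (0:ℝ) ≤ ‖ψ₀dot‖ := norm_nonneg _
    have hb : (0:ℝ) ≤ ‖ψdot j‖ := norm_nonneg _
    rw [div_mul_eq_mul_div, div_le_iff₀ hsum]
    nlinarith [sq_nonneg (l0 * ‖ψ₀dot‖ - l * ‖ψdot j‖), mul_pos hl0 hl,
      mul_le_mul htri htri h0 (by linarith : (0:ℝ) ≤ ‖ψ₀dot‖ + ‖ψdot j‖)]
  -- split off the j-th term and compare the rest with the stand-alone losses
  have key1 : L j (ψ₀dot + ψdot j) + l * ‖ψdot j‖ ^ 2
        + ∑ t ∈ S.erase j, L t (ψstar t)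
      ≤ ∑ t ∈ S, (L t (ψ₀dot + ψdot t) + l * ‖ψdot t‖ ^ 2) := by
    rw [← Finset.add_sum_erase S _ hj]
    have : ∑ t ∈ S.erase j, L t (ψstar t)
        ≤ ∑ t ∈ S.erase j, (L t (ψ₀dot + ψdot t) + l * ‖ψdot t‖ ^ 2) := by
      apply Finset.sum_le_sum
      intro t ht
      have htS := Finset.mem_of_mem_erase ht
      have := H3 t htS
      nlinarith [sq_nonneg ‖ψdot t‖]
    linarith
  have key2 : ∑ t ∈ S, L t ψ₀star
      ≤ ∑ t ∈ S, L t (ψstar t) + ∑ t ∈ S, |L t ψ₀star - L t (ψstar t)| := by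
    rw [← Finset.sum_add_distrib]
    apply Finset.sum_le_sum
    intro t _
    have := le_abs_self (L t ψ₀star - L t (ψstar t))
    linarith
  have split : ∑ t ∈ S, L t (ψstar t)
      = L j (ψstar j) + ∑ t ∈ S.erase j, L t (ψstar t) :=
    (Finset.add_sum_erase S _ hj).symm
  linarith
end

section
/- Generalization boundedness in constants form (Theorem 1 as stated in the main text): Under hypotheses (H1), (H2) and (H3), there exist constants C₁ ≥ 0 and C₂ ≥ 0 and real numbers c_t for t = 1,…,T such that for every index j ∈ {1,…,T}, ‖ψ₀• + ψⱼ•‖ ≤ sqrt( C₁ + C₂ · ∑_{t=1}^{T} |c_t − L_t(ψₜ*)| ); in particular one may take C₁ = λ₀‖ψ₀*‖²/λ̃, C₂ = 1/λ̃, and c_t = L_t(ψ₀*). -/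
/-- Generalization boundedness in constants form (Theorem 1 as stated in the main text). -/
theorem generalization_boundedness_constants
    {V : Type*} [NormedAddCommGroup V] [InnerProductSpace ℝ V]
    (T : ℕ) (hT : 1 ≤ T)
    (L : ℕ → V → ℝ) (hL : ∀ t ∈ Finset.Icc 1 T, ∀ ψ : V, 0 ≤ L t ψ)
    (l0 l : ℝ) (hl0 : 0 < l0) (hl : 0 < l)
    (ψ₀dot : V) (ψdot : ℕ → V) (ψ₀star : V) (ψstar : ℕ → V)
    (H1 : ∑ t ∈ Finset.Icc 1 T, (L t (ψ₀dot + ψdot t) + l * ‖ψdot t‖ ^ 2)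
            + l0 * ‖ψ₀dot‖ ^ 2
          ≤ ∑ t ∈ Finset.Icc 1 T, L t ψ₀star + l0 * ‖ψ₀star‖ ^ 2)
    (H2 : ∀ t ∈ Finset.Icc 1 T, ∀ ψ : V,
            L t (ψstar t) + (l0 * l / (l0 + l)) * ‖ψstar t‖ ^ 2
          ≤ L t ψ + (l0 * l / (l0 + l)) * ‖ψ‖ ^ 2)
    (H3 : ∀ t ∈ Finset.Icc 1 T, L t (ψstar t) ≤ L t (ψ₀dot + ψdot t)) :
    ∃ C₁ C₂ : ℝ, 0 ≤ C₁ ∧ 0 ≤ C₂ ∧ ∃ c : ℕ → ℝ,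
      C₁ = l0 * ‖ψ₀star‖ ^ 2 / (l0 * l / (l0 + l)) ∧
      C₂ = 1 / (l0 * l / (l0 + l)) ∧
      (∀ t ∈ Finset.Icc 1 T, c t = L t ψ₀star) ∧
      ∀ j ∈ Finset.Icc 1 T,
        ‖ψ₀dot + ψdot j‖
          ≤ Real.sqrt (C₁ + C₂ * ∑ t ∈ Finset.Icc 1 T, |c t - L t (ψstar t)|) := by
  have hsum : (0:ℝ) < l0 + l := by linarith
  have hlt : (0:ℝ) < l0 * l / (l0 + l) := div_pos (mul_pos hl0 hl) hsum
  refine ⟨l0 * ‖ψ₀star‖ ^ 2 / (l0 * l / (l0 + l)), 1 / (l0 * l / (l0 + l)),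
    by positivity, by positivity, fun t => L t ψ₀star, rfl, rfl, fun t _ => rfl, ?_⟩
  intro j hj
  set lt := l0 * l / (l0 + l) with hltdef
  set S := ∑ t ∈ Finset.Icc 1 T, |L t ψ₀star - L t (ψstar t)| with hS
  -- key quadratic bound
  have key : lt * ‖ψ₀dot + ψdot j‖ ^ 2 ≤ l0 * ‖ψ₀star‖ ^ 2 + S := by
    have step1 : lt * ‖ψ₀dot + ψdot j‖ ^ 2 ≤ l0 * ‖ψ₀dot‖ ^ 2 + l * ‖ψdot j‖ ^ 2 := by
      have h := norm_add_le ψ₀dot (ψdot j)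
      have hsq : ‖ψ₀dot + ψdot j‖ ^ 2 ≤ (‖ψ₀dot‖ + ‖ψdot j‖) ^ 2 :=
        pow_le_pow_left₀ (norm_nonneg _) h 2
      rw [hltdef, div_mul_eq_mul_div, div_le_iff₀ hsum]
      nlinarith [sq_nonneg (l0 * ‖ψ₀dot‖ - l * ‖ψdot j‖), mul_pos hl0 hl]
    have step2 : l * ‖ψdot j‖ ^ 2 ≤ ∑ t ∈ Finset.Icc 1 T, l * ‖ψdot t‖ ^ 2 :=
      Finset.single_le_sum (f := fun t => l * ‖ψdot t‖ ^ 2) (fun t _ => by positivity) hj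
    have step3 : ∑ t ∈ Finset.Icc 1 T, L t (ψstar t)
        ≤ ∑ t ∈ Finset.Icc 1 T, L t (ψ₀dot + ψdot t) :=
      Finset.sum_le_sum H3
    have step4 : ∑ t ∈ Finset.Icc 1 T, (L t ψ₀star - L t (ψstar t)) ≤ S := by
      rw [hS]
      exact Finset.sum_le_sum (fun t _ => le_abs_self _)
    have hsplit : ∑ t ∈ Finset.Icc 1 T, (L t (ψ₀dot + ψdot t) + l * ‖ψdot t‖ ^ 2)
        = ∑ t ∈ Finset.Icc 1 T, L t (ψ₀dot + ψdot t)
          + ∑ t ∈ Finset.Icc 1 T, l * ‖ψdot t‖ ^ 2 := Finset.sum_add_distrib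
    have hsub : ∑ t ∈ Finset.Icc 1 T, (L t ψ₀star - L t (ψstar t))
        = ∑ t ∈ Finset.Icc 1 T, L t ψ₀star - ∑ t ∈ Finset.Icc 1 T, L t (ψstar t) :=
      Finset.sum_sub_distrib _ _
    rw [hsplit] at H1
    linarith
  have hnn : 0 ≤ l0 * ‖ψ₀star‖ ^ 2 / lt + 1 / lt * S := by
    have hS0 : 0 ≤ S := Finset.sum_nonneg fun t _ => abs_nonneg _
    positivity
  rw [Real.le_sqrt (norm_nonneg _)]
  calc ‖ψ₀dot + ψdot j‖ ^ 2 = (lt * ‖ψ₀dot + ψdot j‖ ^ 2) / lt := by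
        field_simp
    _ ≤ (l0 * ‖ψ₀star‖ ^ 2 + S) / lt := by
        exact div_le_div_of_nonneg_right key hlt.le |>.trans_eq rfl
    _ = l0 * ‖ψ₀star‖ ^ 2 / lt + 1 / lt * S := by ring
  exact hnn
end
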